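/- Let R be an integral domain, X an indeterminate over R, and * a star operation of finite character on R[X]. If every upper to zero in R[X] is a *-maximal ideal of R[X], then c(Q)^{\bar{*}} = R for every upper to zero Q in R[X]. -/
import Mathlib


open Polynomial

/-- A *star operation* on a domain `S` with quotient field `M`: a map on the nonzero
fractional ideals of `S` satisfying `(aI)^* = aI^*`, `I ⊆ I^*`, monotonicity,
idempotency and `S^* = S`. -/
structure IsStarOperation (S M : Type*) [CommRing S] [IsDomain S] [Field M] [Algebra S M]
    [IsFractionRing S M]
    (star : FractionalIdeal (nonZeroDivisors S) M → FractionalIdeal (nonZeroDivisors S) M) :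
    Prop where
  smul_eq : ∀ a : M, a ≠ 0 → ∀ I, I ≠ 0 →
    star (FractionalIdeal.spanSingleton (nonZeroDivisors S) a * I) =
      FractionalIdeal.spanSingleton (nonZeroDivisors S) a * star I
  le_star : ∀ I, I ≠ 0 → I ≤ star I
  mono : ∀ I J, I ≠ 0 → J ≠ 0 → I ≤ J → star I ≤ star J
  idem : ∀ I, I ≠ 0 → star (star I) = star I
  star_one : star 1 = 1

/-- A star operation has *finite character* if
`I^* = ⋃ {J^* : J nonzero finitely generated fractional ideal, J ⊆ I}`. -/
def StarFiniteCharacter (S M : Type*) [CommRing S] [IsDomain S] [Field M] [Algebra S M]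
    [IsFractionRing S M]
    (star : FractionalIdeal (nonZeroDivisors S) M → FractionalIdeal (nonZeroDivisors S) M) :
    Prop :=
  ∀ I, I ≠ 0 → ∀ x : M,
    x ∈ star I ↔ ∃ J : FractionalIdeal (nonZeroDivisors S) M, J ≠ 0 ∧ (J : Submodule S M).FG ∧ J ≤ I ∧ x ∈ star J

/-- `Q` is a `*`-maximal ideal: a proper nonzero integral `*`-ideal which is maximal
among proper integral `*`-ideals. -/
def IsStarMaximal {S M : Type*} [CommRing S] [IsDomain S] [Field M] [Algebra S M]
    [IsFractionRing S M]
    (star : FractionalIdeal (nonZeroDivisors S) M → FractionalIdeal (nonZeroDivisors S) M)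
    (Q : Ideal S) : Prop :=
  Q ≠ ⊥ ∧ Q ≠ ⊤ ∧ star ↑Q = (Q : FractionalIdeal (nonZeroDivisors S) M) ∧
    ∀ J : Ideal S, J ≠ ⊥ → J ≠ ⊤ → star ↑J = (J : FractionalIdeal (nonZeroDivisors S) M) →
      Q ≤ J → Q = J

/-- An *upper to zero* in `R[X]`: a nonzero prime ideal `Q` with `Q ∩ R = (0)`. -/
def IsUpperToZero {R : Type*} [CommRing R] [IsDomain R] (Q : Ideal R[X]) : Prop :=
  Q.IsPrime ∧ Q ≠ ⊥ ∧ Q.comap (C : R →+* R[X]) = ⊥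

/-- `c(Q)`: the content of an ideal `Q` of `R[X]`, the ideal of `R` generated by the
coefficients of all elements of `Q`. -/
def contentIdeal {R : Type*} [CommRing R] (Q : Ideal R[X]) : Ideal R :=
  Ideal.span {a : R | ∃ f ∈ Q, ∃ n, f.coeff n = a}

/-- `c(f)`: the content of a polynomial, the ideal generated by its coefficients. -/
def coeffIdeal {R : Type*} [CommRing R] (f : R[X]) : Ideal R :=
  Ideal.span {a : R | ∃ n, f.coeff n = a}

variable {R K L : Type*} [CommRing R] [IsDomain R]
  [Field K] [Algebra R K] [IsFractionRing R K]
  [Field L] [Algebra R[X] L] [IsFractionRing R[X] L]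

/-- `I^{\bar{*}} = (I[X])^* ∩ K` for an integral ideal `I` of `R`, as a subset of `K`;
here `ι : K →+* L = K(X)` is the canonical embedding. -/
def barStarSet
    (star : FractionalIdeal (nonZeroDivisors R[X]) L → FractionalIdeal (nonZeroDivisors R[X]) L)
    (ι : K →+* L) (I : Ideal R) : Set K :=
  {x : K | ι x ∈ star ((I.map (C : R →+* R[X]) : Ideal R[X]) :
      FractionalIdeal (nonZeroDivisors R[X]) L)}

/-- if every upper to zero in `R[X]` is `*`-maximal, then
`c(Q)^{\bar{*}} = R` for every upper to zero `Q` in `R[X]`. -/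
theorem statement5
    (star : FractionalIdeal (nonZeroDivisors R[X]) L → FractionalIdeal (nonZeroDivisors R[X]) L)
    (hstar : IsStarOperation R[X] L star) (hfc : StarFiniteCharacter R[X] L star)
    (ι : K →+* L) (hι : ∀ r : R, ι (algebraMap R K r) = algebraMap R[X] L (C r))
    (hUTZ : ∀ Q : Ideal R[X], IsUpperToZero Q → IsStarMaximal star Q) :
    ∀ Q : Ideal R[X], IsUpperToZero Q →
      barStarSet star ι (contentIdeal Q) = Set.range (algebraMap R K) := by

  intro Q hQ
  obtain ⟨hQprime, hQne, hQcomap⟩ := hQ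
  set I : Ideal R[X] := (contentIdeal Q).map (C : R →+* R[X]) with hIdef
  have hQI : Q ≤ I := by
    intro f hf
    rw [hIdef, Ideal.mem_map_C_iff]
    intro n
    exact Ideal.subset_span ⟨f, hf, n, rfl⟩
  have hIne : I ≠ ⊥ := fun h => hQne (le_bot_iff.mp (h ▸ hQI))
  have hI0 : (I : FractionalIdeal (nonZeroDivisors R[X]) L) ≠ 0 :=
    FractionalIdeal.coeIdeal_ne_zero.mpr hIne
  have hIle1 : (I : FractionalIdeal (nonZeroDivisors R[X]) L) ≤ 1 :=
    FractionalIdeal.coeIdeal_le_one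
  have hstarI_le_one : star (I : FractionalIdeal (nonZeroDivisors R[X]) L) ≤ 1 := by
    have h1 := hstar.mono (I : FractionalIdeal (nonZeroDivisors R[X]) L) 1 hI0 one_ne_zero hIle1
    rwa [hstar.star_one] at h1
  obtain ⟨J, hJ⟩ := FractionalIdeal.le_one_iff_exists_coeIdeal.mp hstarI_le_one
  have hIJ : (I : FractionalIdeal (nonZeroDivisors R[X]) L) ≤ ↑J :=
    hJ ▸ hstar.le_star _ hI0
  have hQJ : Q ≤ J :=
    (FractionalIdeal.coeIdeal_le_coeIdeal L).mp
      (le_trans ((FractionalIdeal.coeIdeal_le_coeIdeal L).mpr hQI) hIJ)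
  have hJne : J ≠ ⊥ := fun h => hQne (le_bot_iff.mp (h ▸ hQJ))
  have hJstar : star (J : FractionalIdeal (nonZeroDivisors R[X]) L) = ↑J := by
    rw [hJ, hstar.idem _ hI0]
  have hJtop : J = ⊤ := by
    by_contra hJt
    have hQeqJ : Q = J := (hUTZ Q ⟨hQprime, hQne, hQcomap⟩).2.2.2 J hJne hJt hJstar hQJ
    -- get a nonzero element of contentIdeal Q
    obtain ⟨f, hfQ, hfne⟩ := Submodule.exists_mem_ne_zero_of_ne_bot hQne
    obtain ⟨n, hn⟩ : ∃ n, f.coeff n ≠ 0 := by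
      by_contra h
      push_neg at h
      exact hfne (Polynomial.ext h)
    have ha : f.coeff n ∈ contentIdeal Q := Ideal.subset_span ⟨f, hfQ, n, rfl⟩
    have hCa : C (f.coeff n) ∈ I := Ideal.mem_map_of_mem _ ha
    have hCaJ : C (f.coeff n) ∈ J :=
      (FractionalIdeal.coeIdeal_le_coeIdeal L).mp hIJ hCa
    have : f.coeff n ∈ Q.comap (C : R →+* R[X]) := by
      rw [hQeqJ]; exact hCaJ
    rw [hQcomap] at this
    exact hn this
  have hstar1 : star (I : FractionalIdeal (nonZeroDivisors R[X]) L) = 1 := by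
    rw [← hJ, hJtop, FractionalIdeal.coeIdeal_top]
  ext x
  simp only [barStarSet, Set.mem_setOf_eq, ← hIdef, hstar1, FractionalIdeal.mem_one_iff,
    Set.mem_range]
  constructor
  · rintro ⟨f, hf⟩
    obtain ⟨a, b, hb, hab⟩ := IsFractionRing.div_surjective (A := R) x
    have hbK : algebraMap R K b ≠ 0 :=
      IsFractionRing.to_map_ne_zero_of_mem_nonZeroDivisors hb
    have hbne : b ≠ 0 := nonZeroDivisors.ne_zero hb
    have hCbL : algebraMap R[X] L (C b) ≠ 0 := by
      have : (C b : R[X]) ≠ 0 := fun h => hbne (by simpa using congrArg (fun p => p.coeff 0) h)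
      exact fun h => this (IsFractionRing.injective R[X] L (by simpa using h))
    have key : algebraMap R[X] L (f * C b) = algebraMap R[X] L (C a) := by
      rw [map_mul, hf, ← hab, map_div₀, hι, hι]
      field_simp
    have hfb : f * C b = C a := IsFractionRing.injective R[X] L key
    by_cases hf0 : f = 0
    · refine ⟨0, ?_⟩
      have : (C a : R[X]) = 0 := by rw [← hfb, hf0, zero_mul]
      have ha0 : a = 0 := by simpa using congrArg (fun p => p.coeff 0) this
      rw [map_zero, ← hab, ha0, map_zero, zero_div]
    · have hCb0 : (C b : R[X]) ≠ 0 := fun h => hbne (by simpa using congrArg (fun p => p.coeff 0) h)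
      have hdeg : f.natDegree = 0 := by
        have := Polynomial.natDegree_mul hf0 hCb0
        rw [hfb, Polynomial.natDegree_C, Polynomial.natDegree_C] at this
        omega
      obtain ⟨r, rfl⟩ := Polynomial.natDegree_eq_zero.mp hdeg
      have hrb : r * b = a := by
        have := hfb
        rw [← Polynomial.C_mul] at this
        exact Polynomial.C_injective this
      refine ⟨r, ?_⟩
      rw [← hab, ← hrb, map_mul, mul_div_assoc, div_self hbK, mul_one]
  · rintro ⟨r, rfl⟩
    exact ⟨C r, (hι r).symm⟩
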